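/- The function d(u) := (e^{-u²} - 1 + √π·u·erf(u))/u², extended by d(0) = 1, satisfies 2u²·d'''(u) + 4u(3+u²)·d''(u) + 4(3+4u²)·d'(u) + 8u·d(u) = 0 for all u. -/

import Mathlib

open MeasureTheory

/-- The error function erf(u) = (2/√π) ∫₀ᵘ exp(-x²) dx. -/
noncomputable def erf (u : ℝ) : ℝ :=
  (2 / Real.sqrt Real.pi) * ∫ x in (0:ℝ)..u, Real.exp (-x ^ 2)

/-- d(u) = (e^{-u²} − 1 + √π·u·erf(u))/u², extended by d(0) = 1. -/
noncomputable def d (u : ℝ) : ℝ :=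
  if u = 0 then 1
  else (Real.exp (-u ^ 2) - 1 + Real.sqrt Real.pi * u * erf u) / u ^ 2

noncomputable def Nf (u : ℝ) : ℝ :=
  Real.exp (-u ^ 2) - 1 + Real.sqrt Real.pi * u * erf u

noncomputable def f0 (u : ℝ) : ℝ := Nf u / u ^ 2

noncomputable def f1 (u : ℝ) : ℝ :=
  Real.sqrt Real.pi * erf u / u ^ 2 - 2 * Nf u / u ^ 3

noncomputable def f2 (u : ℝ) : ℝ :=
  2 * Real.exp (-u ^ 2) / u ^ 2 - 4 * (Real.sqrt Real.pi * erf u) / u ^ 3 + 6 * Nf u / u ^ 4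

noncomputable def f3 (u : ℝ) : ℝ :=
  -4 * (u * Real.exp (-u ^ 2)) / u ^ 2 - 12 * Real.exp (-u ^ 2) / u ^ 3
    + 18 * (Real.sqrt Real.pi * erf u) / u ^ 4 - 24 * Nf u / u ^ 5

lemma sqrt_pi_ne : Real.sqrt Real.pi ≠ 0 := ne_of_gt (Real.sqrt_pos.mpr Real.pi_pos)

lemma hE (u : ℝ) :
    HasDerivAt (fun x : ℝ => Real.exp (-x ^ 2)) (-2 * u * Real.exp (-u ^ 2)) u := by
  have h1 : HasDerivAt (fun x : ℝ => -x ^ 2) (-(2 * u)) u := by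
    simpa using (hasDerivAt_pow 2 u).fun_neg
  have := (Real.hasDerivAt_exp (-u ^ 2)).comp u h1
  refine this.congr_deriv ?_
  ring

lemma hErf (u : ℝ) :
    HasDerivAt erf (2 / Real.sqrt Real.pi * Real.exp (-u ^ 2)) u := by
  have hc : Continuous fun x : ℝ => Real.exp (-x ^ 2) := by continuity
  have h := (hc.integral_hasStrictDerivAt 0 u).hasDerivAt
  exact h.const_mul (2 / Real.sqrt Real.pi)

lemma erf_cont : Continuous erf := by
  have hdiff : Differentiable ℝ erf := fun u => (hErf u).differentiableAt
  exact hdiff.continuous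

lemma hN (u : ℝ) : HasDerivAt Nf (Real.sqrt Real.pi * erf u) u := by
  have h2 : HasDerivAt (fun x : ℝ => Real.sqrt Real.pi * x) (Real.sqrt Real.pi) u := by
    simpa using (hasDerivAt_id u).const_mul (Real.sqrt Real.pi)
  have h3 := h2.mul (hErf u)
  have h := ((hE u).sub_const 1).add h3
  refine h.congr_deriv ?_
  field_simp
  ring

lemma hf01 {u : ℝ} (hu : u ≠ 0) : HasDerivAt f0 (f1 u) u := by
  have h := (hN u).div (hasDerivAt_pow 2 u) (pow_ne_zero 2 hu)
  refine h.congr_deriv ?_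
  unfold f1
  field_simp
  ring

lemma hf12 {u : ℝ} (hu : u ≠ 0) : HasDerivAt f1 (f2 u) u := by
  have ha := (((hErf u).const_mul (Real.sqrt Real.pi)).div (hasDerivAt_pow 2 u)
    (pow_ne_zero 2 hu))
  have hb := (((hN u).const_mul 2).div (hasDerivAt_pow 3 u) (pow_ne_zero 3 hu))
  have h := ha.sub hb
  refine h.congr_deriv ?_
  unfold f2 Nf
  field_simp
  ring

lemma hf23 {u : ℝ} (hu : u ≠ 0) : HasDerivAt f2 (f3 u) u := by
  have ha := ((hE u).const_mul 2).div (hasDerivAt_pow 2 u) (pow_ne_zero 2 hu)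
  have hb := (((hErf u).const_mul (Real.sqrt Real.pi)).const_mul 4).div
    (hasDerivAt_pow 3 u) (pow_ne_zero 3 hu)
  have hc := ((hN u).const_mul 6).div (hasDerivAt_pow 4 u) (pow_ne_zero 4 hu)
  have h := (ha.sub hb).add hc
  refine h.congr_deriv ?_
  unfold f3 Nf
  field_simp
  ring

lemma d_eq_f0 {u : ℝ} (hu : u ≠ 0) : d u = f0 u := by
  simp [d, f0, Nf, hu]

lemma deriv_d_eq {u : ℝ} (hu : u ≠ 0) : deriv d u = f1 u := by
  have hev : f0 =ᶠ[nhds u] d := by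
    filter_upwards [eventually_ne_nhds hu] with x hx
    exact (d_eq_f0 hx).symm
  rw [← hev.deriv_eq]
  exact (hf01 hu).deriv

lemma iter2_d_eq {u : ℝ} (hu : u ≠ 0) : iteratedDeriv 2 d u = f2 u := by
  rw [show (2 : ℕ) = 1 + 1 from rfl, iteratedDeriv_succ, iteratedDeriv_one]
  have hev : f1 =ᶠ[nhds u] deriv d := by
    filter_upwards [eventually_ne_nhds hu] with x hx
    exact (deriv_d_eq hx).symm
  rw [← hev.deriv_eq]
  exact (hf12 hu).deriv

lemma iter3_d_eq {u : ℝ} (hu : u ≠ 0) : iteratedDeriv 3 d u = f3 u := by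
  rw [show (3 : ℕ) = 2 + 1 from rfl, iteratedDeriv_succ]
  have hev : f2 =ᶠ[nhds u] iteratedDeriv 2 d := by
    filter_upwards [eventually_ne_nhds hu] with x hx
    exact (iter2_d_eq hx).symm
  rw [← hev.deriv_eq]
  exact (hf23 hu).deriv

lemma sqrt_pi_erf (x : ℝ) :
    Real.sqrt Real.pi * erf x = 2 * ∫ t in (0:ℝ)..x, Real.exp (-t ^ 2) := by
  unfold erf
  field_simp

lemma abs_le_of_uIoc {t x : ℝ} (ht : t ∈ Set.uIoc 0 x) : |t| ≤ |x| := by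
  rcases Set.mem_uIoc.mp ht with ⟨h1, h2⟩ | ⟨h1, h2⟩
  · rw [abs_of_pos h1, abs_of_pos (lt_of_lt_of_le h1 h2)]; exact h2
  · rw [abs_of_nonpos h2, abs_of_neg (lt_of_lt_of_le h1 h2)]; linarith

lemma hprime_bound {x : ℝ} (hx : |x| ≤ 1) :
    |Real.sqrt Real.pi * erf x - 2 * x| ≤ 4 * |x| ^ 3 := by
  have hc : Continuous fun t : ℝ => Real.exp (-t ^ 2) := by continuity
  have hsub : Real.sqrt Real.pi * erf x - 2 * x
      = 2 * ∫ t in (0:ℝ)..x, (Real.exp (-t ^ 2) - 1) := by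
    rw [intervalIntegral.integral_sub (hc.intervalIntegrable 0 x)
      (intervalIntegrable_const), sqrt_pi_erf]
    simp
    ring
  rw [hsub]
  have hbound : ∀ t ∈ Set.uIoc 0 x, ‖Real.exp (-t ^ 2) - 1‖ ≤ 2 * x ^ 2 := by
    intro t ht
    have h1 : |t| ≤ |x| := abs_le_of_uIoc ht
    have h2 : t ^ 2 ≤ x ^ 2 := by
      have := sq_abs t; have := sq_abs x
      nlinarith [abs_nonneg t, abs_nonneg x]
    have h3 : |(-t ^ 2 : ℝ)| ≤ 1 := by
      rw [abs_neg, abs_of_nonneg (sq_nonneg t)]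
      nlinarith [sq_abs x, abs_nonneg x]
    have := Real.abs_exp_sub_one_le h3
    rw [abs_neg, abs_of_nonneg (sq_nonneg t)] at this
    calc ‖Real.exp (-t ^ 2) - 1‖ ≤ 2 * t ^ 2 := this
      _ ≤ 2 * x ^ 2 := by linarith
  have := intervalIntegral.norm_integral_le_of_norm_le_const hbound
  have habs : |2 * ∫ t in (0:ℝ)..x, (Real.exp (-t ^ 2) - 1)|
      = 2 * ‖∫ t in (0:ℝ)..x, (Real.exp (-t ^ 2) - 1)‖ := by
    rw [abs_mul, Real.norm_eq_abs, abs_of_nonneg (by norm_num : (0:ℝ) ≤ 2)]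
  rw [habs]
  have hx2 : x ^ 2 = |x| ^ 2 := (sq_abs x).symm
  calc 2 * ‖∫ t in (0:ℝ)..x, (Real.exp (-t ^ 2) - 1)‖
      ≤ 2 * (2 * x ^ 2 * |x - 0|) := by linarith
    _ = 4 * |x| ^ 3 := by rw [hx2, sub_zero]; ring

noncomputable def hfun (x : ℝ) : ℝ := Nf x - x ^ 2

lemma hfun_deriv (x : ℝ) :
    HasDerivAt hfun (Real.sqrt Real.pi * erf x - 2 * x) x := by
  have h := (hN x).sub (hasDerivAt_pow 2 x)
  refine h.congr_deriv ?_
  ring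

lemma hfun_bound {u : ℝ} (hu1 : |u| ≤ 1) : |hfun u| ≤ 4 * |u| ^ 3 * |u| := by
  have hcont : Continuous fun x : ℝ => Real.sqrt Real.pi * erf x - 2 * x := by
    exact (continuous_const.mul erf_cont).sub (continuous_const.mul continuous_id)
  have hint : (∫ x in (0:ℝ)..u, (Real.sqrt Real.pi * erf x - 2 * x))
      = hfun u - hfun 0 :=
    intervalIntegral.integral_eq_sub_of_hasDerivAt
      (fun x _ => hfun_deriv x) (hcont.intervalIntegrable 0 u)
  have h0 : hfun 0 = 0 := by simp [hfun, Nf]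
  have hbound : ∀ x ∈ Set.uIoc 0 u,
      ‖Real.sqrt Real.pi * erf x - 2 * x‖ ≤ 4 * |u| ^ 3 := by
    intro x hx
    have h1 : |x| ≤ |u| := abs_le_of_uIoc hx
    have h2 : |x| ≤ 1 := le_trans h1 hu1
    calc ‖Real.sqrt Real.pi * erf x - 2 * x‖ ≤ 4 * |x| ^ 3 := hprime_bound h2
      _ ≤ 4 * |u| ^ 3 := by
          have := pow_le_pow_left₀ (abs_nonneg x) h1 3
          linarith
  have := intervalIntegral.norm_integral_le_of_norm_le_const hbound
  rw [hint, h0, sub_zero] at this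
  simpa using this

lemma deriv_d_zero : deriv d 0 = 0 := by
  have key : HasDerivAt d 0 0 := by
    rw [hasDerivAt_iff_tendsto_slope]
    apply squeeze_zero_norm' (a := fun u : ℝ => 4 * |u|)
    · have h1 : ∀ᶠ u in nhds (0:ℝ), |u| ≤ 1 := by
        filter_upwards [Metric.ball_mem_nhds (0:ℝ) one_pos] with x hx
        rw [Metric.mem_ball, Real.dist_eq, sub_zero] at hx
        exact le_of_lt hx
      filter_upwards [eventually_nhdsWithin_of_eventually_nhds h1,
        self_mem_nhdsWithin] with u hu1 hu0
      have hu0' : u ≠ 0 := hu0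
      have hslope : slope d 0 u = hfun u / u ^ 3 := by
        rw [slope_def_field, d_eq_f0 hu0']
        have hd0 : d 0 = 1 := by simp [d]
        rw [hd0, sub_zero]
        unfold f0 hfun
        rw [div_sub_one (pow_ne_zero 2 hu0'), div_div,
          show u ^ 2 * u = u ^ 3 by ring]
      rw [hslope]
      have h3 : |u ^ 3| = |u| ^ 3 := abs_pow u 3
      rw [Real.norm_eq_abs, abs_div, h3]
      rw [div_le_iff₀ (by positivity : (0:ℝ) < |u| ^ 3)]
      calc |hfun u| ≤ 4 * |u| ^ 3 * |u| := hfun_bound hu1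
        _ = 4 * |u| * |u| ^ 3 := by ring
    · have : Filter.Tendsto (fun u : ℝ => 4 * |u|) (nhds 0) (nhds 0) := by
        simpa using (continuous_abs.tendsto (0:ℝ)).const_mul 4
      exact this.mono_left nhdsWithin_le_nhds
  exact key.deriv

theorem d_ode (u : ℝ) :
    2 * u ^ 2 * iteratedDeriv 3 d u + 4 * u * (3 + u ^ 2) * iteratedDeriv 2 d u
      + 4 * (3 + 4 * u ^ 2) * deriv d u + 8 * u * d u = 0 := by
  by_cases hu : u = 0
  · subst hu
    simp [deriv_d_zero]
  · rw [iter3_d_eq hu, iter2_d_eq hu, deriv_d_eq hu, d_eq_f0 hu]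
    unfold f0 f1 f2 f3 Nf
    field_simp
    ring
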